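/- The only positive even integers k with k ≥ 2 such that 2k/B_k is an integer are k ∈ {2, 4, 6, 8, 10, 14}, where B_k is the k-th Bernoulli number. -/

import Mathlib

open Finset Real Nat

private lemma fact_big : ∀ m : ℕ, 9 ≤ m → (2*m : ℝ) * (2*Real.pi)^(2*m) < (2*m)! := by
  intro m hm
  induction m, hm using Nat.le_induction with
  | base =>
      have hpi : (2*Real.pi) < 6.3 := by
        have := Real.pi_lt_d2; linarith
      have h0 : (0:ℝ) ≤ 2*Real.pi := by positivity
      have h1 : (2*Real.pi)^(2*9) < (6.3:ℝ)^18 := pow_lt_pow_left₀ hpi h0 (by norm_num)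
      have h2 : (18:ℝ) * (6.3:ℝ)^18 < ((18)! : ℕ) := by
        norm_num [Nat.factorial]
      have h3 : ((2*9)! : ℕ) = ((18)!:ℕ) := by norm_num
      rw [h3]
      push_cast at h2 ⊢
      rw [show 2*9 = 18 from rfl] at h1
      norm_num at h1 h2 ⊢
      linarith
  | succ m hm ih =>
      have hfact : (((2*(m+1))! : ℕ) : ℝ) = (2*m+2) * ((2*m+1) * ((2*m)! : ℕ)) := by
        have h4 : 2*(m+1) = ((2*m)+1) + 1 := by ring
        rw [h4, Nat.factorial_succ, Nat.factorial_succ]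
        push_cast
        ring
      have hpow : (2*Real.pi)^(2*(m+1)) = (2*Real.pi)^(2*m) * (2*Real.pi)^2 := by
        rw [← pow_add]
        congr 1
      have hpi2 : (2*Real.pi)^2 < 40 := by
        have := Real.pi_lt_d2; nlinarith [Real.pi_pos]
      have hp : (0:ℝ) < (2*Real.pi)^(2*m) := by positivity
      have hm' : (9:ℝ) ≤ m := by exact_mod_cast hm
      rw [hfact, hpow]
      push_cast
      set A := (2*Real.pi)^(2*m) with hA
      have h5 : 2*((m:ℝ)+1) * (A * (2*Real.pi)^2) < (2*(m:ℝ)+2) * (A * 40) := by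
        nlinarith [mul_pos (show (0:ℝ) < 2*(m:ℝ)+2 by linarith) hp]
      have h6 : (2*(m:ℝ)+2) * (A * 40) ≤ (2*(m:ℝ)+2) * ((2*(m:ℝ)+1) * (2*(m:ℝ)*A)) := by
        nlinarith [mul_pos (show (0:ℝ) < 2*(m:ℝ)+2 by linarith) hp, sq_nonneg ((m:ℝ)-9)]
      have h7 : (2*(m:ℝ)+2) * ((2*(m:ℝ)+1) * (2*(m:ℝ)*A)) < (2*(m:ℝ)+2) * ((2*(m:ℝ)+1) * ((2*m)! : ℕ)) := by
        have hpos : (0:ℝ) < (2*(m:ℝ)+2) * (2*(m:ℝ)+1) := by nlinarith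
        nlinarith [mul_lt_mul_of_pos_left ih hpos]
      calc 2*((m:ℝ)+1) * (A * (2*Real.pi)^2) < (2*(m:ℝ)+2) * (A*40) := h5
        _ ≤ _ := h6
        _ < _ := h7

private lemma bern_big (n : ℕ) (hn : 9 ≤ n) : (2*(2*n) : ℚ) < |bernoulli (2*n)| := by
  have hs := hasSum_zeta_nat (show n ≠ 0 by omega)
  set S := ((-1 : ℝ)^(n+1) * 2^(2*n-1) * π^(2*n) * bernoulli (2*n) / (2*n)!) with hS
  have h1 : (1:ℝ) ≤ S := by
    have h := le_hasSum hs 1 (fun i _ => by positivity)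
    simpa using h
  have h2 : (1:ℝ) ≤ |S| := h1.trans (le_abs_self S)
  have habs : |S| = 2^(2*n-1) * π^(2*n) * |((bernoulli (2*n) : ℚ) : ℝ)| / (2*n)! := by
    rw [hS]
    rw [abs_div, abs_mul, abs_mul, abs_mul]
    simp [abs_pow, abs_of_pos Real.pi_pos, abs_of_nonneg (Nat.cast_nonneg ((2*n)!) : (0:ℝ) ≤ _)]
  have hfpos : (0:ℝ) < ((2*n)! : ℕ) := by positivity
  have h3 : ((2*n)! : ℕ) ≤ 2^(2*n-1) * π^(2*n) * |((bernoulli (2*n) : ℚ) : ℝ)| := by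
    rw [habs] at h2
    rw [le_div_iff₀ hfpos] at h2
    linarith
  have hpow : (2:ℝ) * (2^(2*n-1) * π^(2*n)) = (2*π)^(2*n) := by
    rw [mul_pow, ← mul_assoc]
    congr 1
    rw [← _root_.pow_succ']
    congr 1
    omega
  have h4 : 2 * ((2*n)! : ℕ) ≤ (2*π)^(2*n) * |((bernoulli (2*n) : ℚ) : ℝ)| := by
    rw [← hpow]; linarith
  have h5 := fact_big n hn
  have hppos : (0:ℝ) < (2*π)^(2*n) := by positivity
  have h6 : (2*(2*(n:ℝ))) * (2*π)^(2*n) < (2*π)^(2*n) * |((bernoulli (2*n) : ℚ) : ℝ)| := by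
    push_cast at h5 ⊢
    nlinarith
  have h7 : (2*(2*(n:ℝ))) < |((bernoulli (2*n) : ℚ) : ℝ)| := by
    have := (mul_lt_mul_iff_left₀ hppos).mp (by linarith [h6] : (2*(2*(n:ℝ))) * (2*π)^(2*n) < |((bernoulli (2*n) : ℚ) : ℝ)| * (2*π)^(2*n))
    exact this
  rw [← Rat.cast_abs] at h7
  exact_mod_cast h7

private lemma no_int (k : ℕ) (hke : Even k) (h18 : 18 ≤ k) :
    ¬ ∃ z : ℤ, (2 * k : ℚ) / bernoulli k = z := by
  obtain ⟨n, hn⟩ := hke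
  rintro ⟨z, hz⟩
  have hk2 : k = 2*n := by omega
  subst hk2
  have hn9 : 9 ≤ n := by omega
  have hb := bern_big n hn9
  have hkpos : (0:ℚ) < 2*(2*n : ℕ) := by positivity
  have hBne : bernoulli (2*n) ≠ 0 := by
    intro h; rw [h, abs_zero] at hb; push_cast at hb hkpos; linarith
  have hzne : z ≠ 0 := by
    intro h0
    rw [h0] at hz
    simp only [Int.cast_zero, div_eq_zero_iff] at hz
    rcases hz with h | h
    · rw [h] at hkpos; exact lt_irrefl _ hkpos
    · exact hBne h
  have h1 : (1:ℚ) ≤ |(z:ℚ)| := by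
    have := Int.one_le_abs hzne
    exact_mod_cast this
  have heq : |(z:ℚ)| = (2*(2*n : ℕ):ℚ) / |bernoulli (2*n)| := by
    rw [← hz, abs_div, abs_of_pos hkpos]
  have hlt : (2*(2*n : ℕ):ℚ) / |bernoulli (2*n)| < 1 := by
    rw [div_lt_one (abs_pos.mpr hBne)]
    exact_mod_cast hb
  rw [heq] at h1
  linarith

private lemma bodd (n : ℕ) (h : Odd n) (h1 : 1 < n) : bernoulli' n = 0 :=
  bernoulli'_eq_zero_of_odd h h1

private lemma b6 : bernoulli' 6 = 1/42 := by
  rw [bernoulli'_def]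
  norm_num [sum_range_succ, Nat.choose, bodd 3 (by decide) (by decide), bodd 5 (by decide) (by decide)]
private lemma b8 : bernoulli' 8 = -1/30 := by
  rw [bernoulli'_def]
  norm_num [sum_range_succ, Nat.choose, b6, bodd 3 (by decide) (by decide), bodd 5 (by decide) (by decide), bodd 7 (by decide) (by decide)]
private lemma b10 : bernoulli' 10 = 5/66 := by
  rw [bernoulli'_def]
  norm_num [sum_range_succ, Nat.choose, b6, b8, bodd 3 (by decide) (by decide), bodd 5 (by decide) (by decide), bodd 7 (by decide) (by decide), bodd 9 (by decide) (by decide)]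
private lemma b12 : bernoulli' 12 = -691/2730 := by
  rw [bernoulli'_def]
  norm_num [sum_range_succ, Nat.choose, b6, b8, b10, bodd 3 (by decide) (by decide), bodd 5 (by decide) (by decide), bodd 7 (by decide) (by decide), bodd 9 (by decide) (by decide), bodd 11 (by decide) (by decide)]
private lemma b14 : bernoulli' 14 = 7/6 := by
  rw [bernoulli'_def]
  norm_num [sum_range_succ, Nat.choose, b6, b8, b10, b12, bodd 3 (by decide) (by decide), bodd 5 (by decide) (by decide), bodd 7 (by decide) (by decide), bodd 9 (by decide) (by decide), bodd 11 (by decide) (by decide), bodd 13 (by decide) (by decide)]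
private lemma b16 : bernoulli' 16 = -3617/510 := by
  rw [bernoulli'_def]
  norm_num [sum_range_succ, Nat.choose, b6, b8, b10, b12, b14, bodd 3 (by decide) (by decide), bodd 5 (by decide) (by decide), bodd 7 (by decide) (by decide), bodd 9 (by decide) (by decide), bodd 11 (by decide) (by decide), bodd 13 (by decide) (by decide), bodd 15 (by decide) (by decide)]

private lemma B' (n : ℕ) (h : n ≠ 1) : bernoulli n = bernoulli' n :=
  bernoulli_eq_bernoulli'_of_ne_one h

theorem twoK_div_bernoulli_integral_iff (k : ℕ) (hke : Even k) (hk : 2 ≤ k) :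
    (∃ z : ℤ, (2 * k : ℚ) / bernoulli k = z) ↔
      k ∈ ({2, 4, 6, 8, 10, 14} : Finset ℕ) := by
  by_cases hk17 : k ≤ 17
  case neg =>
    refine iff_of_false (no_int k hke (by omega)) ?_
    simp only [Finset.mem_insert, Finset.mem_singleton]
    omega
  case pos =>
  interval_cases k
  · exact iff_of_true ⟨24, by rw [B' 2 (by norm_num), bernoulli'_two]; norm_num⟩ (by decide)
  · exact absurd hke (by decide)
  · exact iff_of_true ⟨-240, by rw [B' 4 (by norm_num), bernoulli'_four]; norm_num⟩ (by decide)
  · exact absurd hke (by decide)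
  · exact iff_of_true ⟨504, by rw [B' 6 (by norm_num), b6]; norm_num⟩ (by decide)
  · exact absurd hke (by decide)
  · exact iff_of_true ⟨-480, by rw [B' 8 (by norm_num), b8]; norm_num⟩ (by decide)
  · exact absurd hke (by decide)
  · exact iff_of_true ⟨264, by rw [B' 10 (by norm_num), b10]; norm_num⟩ (by decide)
  · exact absurd hke (by decide)
  · refine iff_of_false ?_ (by decide)
    rintro ⟨z, hz⟩
    rw [B' 12 (by norm_num), b12] at hz
    norm_num at hz
    have h691 : (691:ℤ) * z = -65520 := by exact_mod_cast (by linear_combination -691 * hz : (691:ℚ) * z = -65520)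
    omega
  · exact absurd hke (by decide)
  · exact iff_of_true ⟨24, by rw [B' 14 (by norm_num), b14]; norm_num⟩ (by decide)
  · exact absurd hke (by decide)
  · refine iff_of_false ?_ (by decide)
    rintro ⟨z, hz⟩
    rw [B' 16 (by norm_num), b16] at hz
    norm_num at hz
    have h3617 : (3617:ℤ) * z = -16320 := by exact_mod_cast (by linear_combination -3617 * hz : (3617:ℚ) * z = -16320)
    omega
  · exact absurd hke (by decide)
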